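/- Let c ∈ ℝ, η ∈ ℝ with η ≠ 0, and let u, v : U → ℝ be smooth functions on an open set U ⊆ ℝ² satisfying u_{xt} = (u² − v² + c)v_x + u, v_{xt} = (u² − v² + c)u_x + v on U. Define F₁₁ = −η√2·u_x, F₁₂ = (√2/η)v, F₂₁ = η², F₂₂ = 1/η² + u² − v² + c, F₃₁ = η√2·v_x, F₃₂ = −(√2/η)u. Then on U the structure equations with δ = 1 hold: −∂_t F₁₁ + ∂_x F₁₂ = F₃₁F₂₂ − F₃₂F₂₁, −∂_t F₂₁ + ∂_x F₂₂ = F₁₁F₃₂ − F₁₂F₃₁, −∂_t F₃₁ + ∂_x F₃₂ = F₁₁F₂₂ − F₁₂F₂₁; hence this system describes pseudospherical surfaces with these associated functions. -/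

import Mathlib

open Real

/-- Partial derivative in the `x` direction of a function on the `(x, t)` plane. -/
noncomputable def pdx (f : ℝ × ℝ → ℝ) (p : ℝ × ℝ) : ℝ := fderiv ℝ f p (1, 0)

/-- Partial derivative in the `t` direction of a function on the `(x, t)` plane. -/
noncomputable def pdt (f : ℝ × ℝ → ℝ) (p : ℝ × ℝ) : ℝ := fderiv ℝ f p (0, 1)

/-- The structure equations of a surface of constant Gaussian curvature `-δ`. -/
def StructEqs (δ : ℝ) (U : Set (ℝ × ℝ)) (F11 F12 F21 F22 F31 F32 : ℝ × ℝ → ℝ) : Prop :=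
  ∀ p ∈ U,
    -(pdt F11 p) + pdx F12 p = F31 p * F22 p - F32 p * F21 p ∧
    -(pdt F21 p) + pdx F22 p = F11 p * F32 p - F12 p * F31 p ∧
    -(pdt F31 p) + pdx F32 p = δ * (F11 p * F22 p - F12 p * F21 p)

lemma pdt_const_mul (a : ℝ) (f : ℝ × ℝ → ℝ) (p : ℝ × ℝ) (hf : DifferentiableAt ℝ f p) :
    pdt (fun q => a * f q) p = a * pdt f p := by
  simp [pdt, fderiv_const_mul hf]

lemma pdx_const_mul (a : ℝ) (f : ℝ × ℝ → ℝ) (p : ℝ × ℝ) (hf : DifferentiableAt ℝ f p) :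
    pdx (fun q => a * f q) p = a * pdx f p := by
  simp [pdx, fderiv_const_mul hf]

lemma contDiffOn_pdx (U : Set (ℝ × ℝ)) (hU : IsOpen U) (u : ℝ × ℝ → ℝ)
    (hu : ContDiffOn ℝ (⊤ : ℕ∞) u U) : ContDiffOn ℝ (⊤ : ℕ∞) (pdx u) U := by
  have h1 : ContDiffOn ℝ (⊤ : ℕ∞) (fun x => fderiv ℝ u x) U :=
    hu.fderiv_of_isOpen hU (by exact_mod_cast le_top)
  exact h1.clm_apply contDiffOn_const

/-- The system `u_xt = (u² − v² + c)v_x + u`, `v_xt = (u² − v² + c)u_x + v`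
describes pseudospherical surfaces. -/
theorem system_7mplrex1_describes_pss (c η : ℝ) (hη : η ≠ 0) (U : Set (ℝ × ℝ)) (hU : IsOpen U)
    (u v : ℝ × ℝ → ℝ)
    (hu : ContDiffOn ℝ (⊤ : ℕ∞) u U) (hv : ContDiffOn ℝ (⊤ : ℕ∞) v U)
    (heq1 : ∀ p ∈ U, pdt (pdx u) p = (u p ^ 2 - v p ^ 2 + c) * pdx v p + u p)
    (heq2 : ∀ p ∈ U, pdt (pdx v) p = (u p ^ 2 - v p ^ 2 + c) * pdx u p + v p) :
    StructEqs 1 U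
      (fun q => -(η * Real.sqrt 2) * pdx u q)
      (fun q => Real.sqrt 2 / η * v q)
      (fun _ => η ^ 2)
      (fun q => 1 / η ^ 2 + u q ^ 2 - v q ^ 2 + c)
      (fun q => η * Real.sqrt 2 * pdx v q)
      (fun q => -(Real.sqrt 2 / η) * u q) := by
  intro p hp
  have hpU : U ∈ nhds p := hU.mem_nhds hp
  have hud : DifferentiableAt ℝ u p := (hu.differentiableOn (by simp)).differentiableAt hpU
  have hvd : DifferentiableAt ℝ v p := (hv.differentiableOn (by simp)).differentiableAt hpU
  have huxd : DifferentiableAt ℝ (pdx u) p :=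
    (((contDiffOn_pdx U hU u hu).differentiableOn (by simp)).differentiableAt hpU)
  have hvxd : DifferentiableAt ℝ (pdx v) p :=
    (((contDiffOn_pdx U hU v hv).differentiableOn (by simp)).differentiableAt hpU)
  have hs : Real.sqrt 2 * Real.sqrt 2 = 2 := Real.mul_self_sqrt (by norm_num)
  have hs2 : Real.sqrt 2 ^ 2 = 2 := Real.sq_sqrt (by norm_num)
  -- pdx of F22
  have hsqu : HasFDerivAt (fun q => u q * u q)
      (u p • fderiv ℝ u p + u p • fderiv ℝ u p) p := hud.hasFDerivAt.mul hud.hasFDerivAt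
  have hsqv : HasFDerivAt (fun q => v q * v q)
      (v p • fderiv ℝ v p + v p • fderiv ℝ v p) p := hvd.hasFDerivAt.mul hvd.hasFDerivAt
  have hF22 : HasFDerivAt (fun q => 1 / η ^ 2 + u q * u q - v q * v q + c)
      (((u p • fderiv ℝ u p + u p • fderiv ℝ u p)
        - (v p • fderiv ℝ v p + v p • fderiv ℝ v p))) p :=
    ((hsqu.const_add _).sub hsqv).add_const c
  have hfun : (fun q : ℝ × ℝ => 1 / η ^ 2 + u q ^ 2 - v q ^ 2 + c)
      = fun q => 1 / η ^ 2 + u q * u q - v q * v q + c := by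
    funext q; ring
  have hF22x : pdx (fun q => 1 / η ^ 2 + u q ^ 2 - v q ^ 2 + c) p
      = 2 * u p * pdx u p - 2 * v p * pdx v p := by
    rw [pdx, hfun, hF22.fderiv]
    simp [pdx, smul_eq_mul]
    ring
  have hF22t : pdt (fun _ : ℝ × ℝ => η ^ 2) p = 0 := by simp [pdt]
  refine ⟨?_, ?_, ?_⟩
  · rw [pdt_const_mul _ _ _ huxd, pdx_const_mul _ _ _ hvd, heq1 p hp]
    field_simp
    nlinarith [hs, hs2]
  · rw [hF22t, hF22x]
    field_simp
    ring_nf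
    rw [hs2]
  · rw [pdt_const_mul _ _ _ hvxd, pdx_const_mul _ _ _ hud, heq2 p hp]
    field_simp
    nlinarith [hs, hs2]
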